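/- Under the assumptions of the block-decoupling construction, the upper-left block of Uᴴ M conj(U) equals (1+ξξᴴ)^{-1/2}(L₁ − Gξᵀ − ξGᵀ + ξL₂ξᵀ)(1+conj(ξ)ξᵀ)^{-1/2}, which also equals (1+ξξᴴ)^{-1/2}(L₁ − ξGᵀ)(1+conj(ξ)ξᵀ)^{1/2} and (1+ξξᴴ)^{1/2}(L₁ − Gξᵀ)(1+conj(ξ)ξᵀ)^{-1/2}. -/

import Mathlib

open Matrix ComplexOrder

/-- The positive semidefinite square root of `1 + ξ * ξᴴ`. -/
noncomputable def sqrtOnePlusSelfMulConjTranspose {n₁ n₂ : ℕ}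
    (ξ : Matrix (Fin n₁) (Fin n₂) ℂ) : Matrix (Fin n₁) (Fin n₁) ℂ :=
  (Matrix.PosSemidef.add Matrix.PosSemidef.one (Matrix.posSemidef_self_mul_conjTranspose ξ)).1.eigenvectorUnitary.1 *
    Matrix.diagonal ((↑) ∘ (√·) ∘ (Matrix.PosSemidef.add Matrix.PosSemidef.one (Matrix.posSemidef_self_mul_conjTranspose ξ)).1.eigenvalues) *
    (star (Matrix.PosSemidef.add Matrix.PosSemidef.one (Matrix.posSemidef_self_mul_conjTranspose ξ)).1.eigenvectorUnitary : Matrix _ _ ℂ)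

/-- The positive semidefinite square root of `1 + ξᴴ * ξ`. -/
noncomputable def sqrtOnePlusConjTransposeMulSelf {n₁ n₂ : ℕ}
    (ξ : Matrix (Fin n₁) (Fin n₂) ℂ) : Matrix (Fin n₂) (Fin n₂) ℂ :=
  (Matrix.PosSemidef.add Matrix.PosSemidef.one (Matrix.posSemidef_conjTranspose_mul_self ξ)).1.eigenvectorUnitary.1 *
    Matrix.diagonal ((↑) ∘ (√·) ∘ (Matrix.PosSemidef.add Matrix.PosSemidef.one (Matrix.posSemidef_conjTranspose_mul_self ξ)).1.eigenvalues) *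
    (star (Matrix.PosSemidef.add Matrix.PosSemidef.one (Matrix.posSemidef_conjTranspose_mul_self ξ)).1.eigenvectorUnitary : Matrix _ _ ℂ)

/-- The standard unitary block matrix built from `ξ`. -/
noncomputable def blockUnitary {n₁ n₂ : ℕ} (ξ : Matrix (Fin n₁) (Fin n₂) ℂ) :
    Matrix (Fin n₁ ⊕ Fin n₂) (Fin n₁ ⊕ Fin n₂) ℂ :=
  Matrix.fromBlocks
    (sqrtOnePlusSelfMulConjTranspose ξ)⁻¹ (ξ * (sqrtOnePlusConjTransposeMulSelf ξ)⁻¹)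
    (-(ξᴴ * (sqrtOnePlusSelfMulConjTranspose ξ)⁻¹)) (sqrtOnePlusConjTransposeMulSelf ξ)⁻¹

/-- Under the block-decoupling construction, the upper-left block of `Uᴴ M conj(U)` equals
`(1+ξξᴴ)^{-1/2}(L₁ − Gξᵀ − ξGᵀ + ξL₂ξᵀ)(1+conj(ξ)ξᵀ)^{-1/2}`, which also equals
`(1+ξξᴴ)^{-1/2}(L₁ − ξGᵀ)(1+conj(ξ)ξᵀ)^{1/2}` and `(1+ξξᴴ)^{1/2}(L₁ − Gξᵀ)(1+conj(ξ)ξᵀ)^{-1/2}`. -/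
theorem block_decoupling_upper_left_block (n₁ n₂ : ℕ)
    (L₁ : Matrix (Fin n₁) (Fin n₁) ℂ) (L₂ : Matrix (Fin n₂) (Fin n₂) ℂ)
    (G : Matrix (Fin n₁) (Fin n₂) ℂ) (hL₁ : L₁ᵀ = L₁) (hL₂ : L₂ᵀ = L₂)
    (ξ : Matrix (Fin n₁) (Fin n₂) ℂ)
    (hξ : G + L₁ * ξ.map (starRingEnd ℂ) - ξ * L₂ - ξ * Gᵀ * ξ.map (starRingEnd ℂ) = 0) :
    ((blockUnitary ξ)ᴴ * Matrix.fromBlocks L₁ G Gᵀ L₂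
        * (blockUnitary ξ).map (starRingEnd ℂ)).toBlocks₁₁ =
      (sqrtOnePlusSelfMulConjTranspose ξ)⁻¹
        * (L₁ - G * ξᵀ - ξ * Gᵀ + ξ * L₂ * ξᵀ)
        * ((sqrtOnePlusSelfMulConjTranspose ξ)⁻¹).map (starRingEnd ℂ) ∧
    ((blockUnitary ξ)ᴴ * Matrix.fromBlocks L₁ G Gᵀ L₂
        * (blockUnitary ξ).map (starRingEnd ℂ)).toBlocks₁₁ =
      (sqrtOnePlusSelfMulConjTranspose ξ)⁻¹ * (L₁ - ξ * Gᵀ)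
        * (sqrtOnePlusSelfMulConjTranspose ξ).map (starRingEnd ℂ) ∧
    ((blockUnitary ξ)ᴴ * Matrix.fromBlocks L₁ G Gᵀ L₂
        * (blockUnitary ξ).map (starRingEnd ℂ)).toBlocks₁₁ =
      sqrtOnePlusSelfMulConjTranspose ξ * (L₁ - G * ξᵀ)
        * ((sqrtOnePlusSelfMulConjTranspose ξ)⁻¹).map (starRingEnd ℂ) := by
  classical
  set c := starRingEnd ℂ
  set S := sqrtOnePlusSelfMulConjTranspose ξ with hSdef
  have hSS : S * S = 1 + ξ * ξᴴ := by
    have hP := Matrix.PosSemidef.add Matrix.PosSemidef.one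
      (Matrix.posSemidef_self_mul_conjTranspose ξ)
    rw [hSdef, sqrtOnePlusSelfMulConjTranspose]
    have hU := Unitary.coe_star_mul_self hP.1.eigenvectorUnitary
    conv_rhs => rw [hP.1.spectral_theorem]
    rw [Unitary.conjStarAlgAut_apply]
    simp only [Matrix.mul_assoc]
    rw [← Matrix.mul_assoc (star _) _ (diagonal _ * _), hU, Matrix.one_mul,
      ← Matrix.mul_assoc (diagonal _) (diagonal _), diagonal_mul_diagonal]
    congr 3
    funext i
    simp only [Function.comp_apply]
    rw [← Complex.ofReal_mul, Real.mul_self_sqrt (hP.eigenvalues_nonneg i)]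
    rfl
  have hSH : Sᴴ = S := by
    rw [hSdef, sqrtOnePlusSelfMulConjTranspose]
    rw [conjTranspose_mul, conjTranspose_mul, diagonal_conjTranspose, star_eq_conjTranspose,
      conjTranspose_conjTranspose, ← Matrix.mul_assoc]
    congr 3
    funext i
    simp
  have hPD : (1 + ξ * ξᴴ).PosDef :=
    Matrix.PosDef.add_posSemidef Matrix.PosDef.one
      (Matrix.posSemidef_self_mul_conjTranspose ξ)
  have hdet : IsUnit S.det := by
    have h : S.det * S.det = (1 + ξ * ξᴴ).det := by rw [← det_mul, hSS]
    have hne : (1 + ξ * ξᴴ).det ≠ 0 := hPD.det_pos.ne'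
    exact isUnit_iff_ne_zero.2 fun h0 => hne (by rw [← h, h0, mul_zero])
  have hSinv : S⁻¹ * S = 1 := nonsing_inv_mul S hdet
  have hinvS : S * S⁻¹ = 1 := mul_nonsing_inv S hdet
  have hSinvH : (S⁻¹)ᴴ = S⁻¹ := by rw [conjTranspose_nonsing_inv, hSH]
  have hconjH : (ξᴴ).map c = ξᵀ := by
    ext i j; simp [conjTranspose_apply, c]
  have hmapneg : (-(ξᴴ * S⁻¹)).map ⇑c = -(ξᵀ * (S⁻¹).map ⇑c) := by
    rw [← hconjH]
    ext i j; simp [Matrix.map_apply, Matrix.mul_apply, map_sum, _root_.map_mul]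
  have hone : (1 : Matrix (Fin n₁) (Fin n₁) ℂ).map ⇑c = 1 := by
    ext i j; by_cases h : i = j <;> simp [Matrix.one_apply, h]
  -- compute the upper-left block
  have hblock : ((blockUnitary ξ)ᴴ * Matrix.fromBlocks L₁ G Gᵀ L₂
        * (blockUnitary ξ).map c).toBlocks₁₁ =
      S⁻¹ * (L₁ - G * ξᵀ - ξ * Gᵀ + ξ * L₂ * ξᵀ) * (S⁻¹).map c := by
    simp only [blockUnitary, ← hSdef, fromBlocks_conjTranspose, fromBlocks_map,
      fromBlocks_multiply, toBlocks_fromBlocks₁₁, conjTranspose_neg, conjTranspose_mul,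
      conjTranspose_conjTranspose, hSinvH, hmapneg]
    simp only [Matrix.mul_sub, Matrix.sub_mul, Matrix.mul_add, Matrix.add_mul,
      Matrix.neg_mul, Matrix.mul_neg, neg_neg, Matrix.mul_assoc]
    abel
  rw [hblock]
  -- conjugates of S
  have hcc : S.map ⇑c * S.map ⇑c = 1 + ξ.map ⇑c * ξᵀ := by
    rw [← Matrix.map_mul, hSS, ← hconjH]
    ext i j
    simp [Matrix.map_apply, Matrix.mul_apply, Matrix.one_apply, Matrix.add_apply,
      map_sum, _root_.map_mul, apply_ite c]
  have hcinv : S.map ⇑c * (S⁻¹).map ⇑c = 1 := by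
    rw [← Matrix.map_mul, hinvS, hone]
  -- key identity 1 : multiply hξ on the right by ξᵀ
  have key1 : L₁ - G * ξᵀ - ξ * Gᵀ + ξ * L₂ * ξᵀ
      = (L₁ - ξ * Gᵀ) * (1 + ξ.map ⇑c * ξᵀ) := by
    have h := congrArg (fun X => X * ξᵀ) hξ
    simp only [Matrix.add_mul, Matrix.sub_mul, Matrix.zero_mul, Matrix.mul_assoc] at h
    simp only [Matrix.mul_add, Matrix.mul_one, Matrix.sub_mul, Matrix.mul_assoc]
    linear_combination (norm := abel) -h
  -- key identity 2 : transpose hξ and multiply on the left by ξ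
  have hT : Gᵀ + ξᴴ * L₁ - L₂ * ξᵀ - ξᴴ * (G * ξᵀ) = 0 := by
    have h := congrArg Matrix.transpose hξ
    simp only [transpose_add, transpose_sub, transpose_mul, transpose_zero,
      transpose_transpose, hL₁, hL₂, Matrix.mul_assoc] at h
    have hmc : (ξ.map ⇑c)ᵀ = ξᴴ := rfl
    rw [hmc] at h
    linear_combination (norm := abel) h
  have key2 : L₁ - G * ξᵀ - ξ * Gᵀ + ξ * L₂ * ξᵀ
      = (1 + ξ * ξᴴ) * (L₁ - G * ξᵀ) := by
    have h := congrArg (fun X => ξ * X) hT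
    simp only [Matrix.mul_add, Matrix.mul_sub, Matrix.mul_zero, Matrix.mul_assoc] at h
    simp only [Matrix.add_mul, Matrix.one_mul, Matrix.mul_sub, Matrix.mul_assoc]
    linear_combination (norm := abel) -h
  refine ⟨rfl, ?_, ?_⟩
  · rw [key1, ← hcc]
    simp only [Matrix.mul_assoc]
    rw [hcinv, Matrix.mul_one]
  · rw [key2, ← hSS]
    simp only [← Matrix.mul_assoc]
    rw [hSinv, Matrix.one_mul]
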